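/- arXiv:1410.3729 — 2 statements merged into one kernel-verified Lean document; each statement's English description precedes it below -/
import Mathlib

section
/- Let H be a complex Hilbert space and let s be a sesquilinear form on H (linear in the first argument, conjugate-linear in the second) such that Re s(w,w) ≥ c‖w‖² for all w ∈ H, where c > 1 is a constant. Then for every δ with 1/c < δ < 1 and all w, v ∈ H one has |s(w,w) − ⟨v, 2w − v⟩| ≥ (c − 1/δ)‖w‖² + (1 − δ)‖v‖². In particular there exists α > 0, depending only on c, such that |s(w,w) − ⟨v, 2w − v⟩| ≥ α(‖w‖² + ‖v‖²) for all w, v ∈ H. -/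
/-- T-coercivity estimate with `T(w,v) = (w, 2w - v)` on a complex Hilbert space:
if the sesquilinear form `s` (linear in the first argument, conjugate-linear in the
second) satisfies `Re s(w,w) ≥ c ‖w‖²` with `c > 1`, then for every `1/c < δ < 1`,
`|s(w,w) - ⟨v, 2w - v⟩| ≥ (c - 1/δ) ‖w‖² + (1 - δ) ‖v‖²`, and in particular there is
`α > 0` depending only on `c` with
`|s(w,w) - ⟨v, 2w - v⟩| ≥ α (‖w‖² + ‖v‖²)`.
Here the inner product `⟨·,·⟩` is conjugate-linear in the second argument, so that
`⟨v, 2w - v⟩ = ⟪2w - v, v⟫_ℂ` in Mathlib's convention. -/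
theorem stmt0 {H : Type*} [NormedAddCommGroup H] [InnerProductSpace ℂ H] [CompleteSpace H]
    (s : H →ₗ[ℂ] H →ₗ⋆[ℂ] ℂ) (c : ℝ) (hc : 1 < c)
    (hcoer : ∀ w : H, c * ‖w‖ ^ 2 ≤ (s w w).re) :
    (∀ δ : ℝ, 1 / c < δ → δ < 1 → ∀ w v : H,
      (c - 1 / δ) * ‖w‖ ^ 2 + (1 - δ) * ‖v‖ ^ 2
        ≤ ‖s w w - (inner ℂ ((2 : ℂ) • w - v) v : ℂ)‖) ∧
    (∃ α : ℝ, 0 < α ∧ ∀ w v : H,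
      α * (‖w‖ ^ 2 + ‖v‖ ^ 2)
        ≤ ‖s w w - (inner ℂ ((2 : ℂ) • w - v) v : ℂ)‖) := by
  have hc0 : (0:ℝ) < c := by linarith
  have key : ∀ δ : ℝ, 1 / c < δ → δ < 1 → ∀ w v : H,
      (c - 1 / δ) * ‖w‖ ^ 2 + (1 - δ) * ‖v‖ ^ 2
        ≤ ‖s w w - (inner ℂ ((2 : ℂ) • w - v) v : ℂ)‖ := by
    intro δ hδ1 hδ2 w v
    have hδ0 : (0:ℝ) < δ := lt_trans (by positivity) hδ1
    have h1 : ((s w w - (inner ℂ ((2 : ℂ) • w - v) v : ℂ)).re : ℝ)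
        ≤ ‖s w w - (inner ℂ ((2 : ℂ) • w - v) v : ℂ)‖ := Complex.re_le_norm _
    have hre : (s w w - (inner ℂ ((2 : ℂ) • w - v) v : ℂ)).re
        = (s w w).re - (2 * (inner ℂ w v : ℂ).re - ‖v‖ ^ 2) := by
      rw [inner_sub_left, inner_smul_left]
      rw [inner_self_eq_norm_sq_to_K]
      simp [Complex.mul_re, pow_two]
    have hwv : (inner ℂ w v : ℂ).re ≤ ‖w‖ * ‖v‖ := by
      have := re_inner_le_norm (𝕜 := ℂ) w v
      simpa using this
    have hyoung : 2 * (‖w‖ * ‖v‖) ≤ (1/δ) * ‖w‖ ^ 2 + δ * ‖v‖ ^ 2 := by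
      have key2 : 2 * (‖w‖ * ‖v‖) * δ ≤ ‖w‖ ^ 2 + δ ^ 2 * ‖v‖ ^ 2 := by
        nlinarith [sq_nonneg (‖w‖ - δ * ‖v‖)]
      calc 2 * (‖w‖ * ‖v‖) = (2 * (‖w‖ * ‖v‖) * δ) / δ := by field_simp
        _ ≤ (‖w‖ ^ 2 + δ ^ 2 * ‖v‖ ^ 2) / δ := by gcongr
        _ = (1/δ) * ‖w‖ ^ 2 + δ * ‖v‖ ^ 2 := by field_simp
    have hcw := hcoer w
    calc (c - 1 / δ) * ‖w‖ ^ 2 + (1 - δ) * ‖v‖ ^ 2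
        ≤ (s w w - (inner ℂ ((2 : ℂ) • w - v) v : ℂ)).re := by
          rw [hre]; nlinarith
      _ ≤ _ := h1
  refine ⟨key, ?_⟩
  set δ := (1 / c + 1) / 2 with hδdef
  have h1c : 1 / c < 1 := by
    rw [div_lt_one hc0]; exact hc
  have hδ1 : 1 / c < δ := by rw [hδdef]; linarith
  have hδ2 : δ < 1 := by rw [hδdef]; linarith
  have hδ0 : (0:ℝ) < δ := lt_trans (by positivity) hδ1
  have hα1 : 0 < c - 1 / δ := by
    have h' : 1 < δ * c := (div_lt_iff₀ hc0).mp hδ1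
    have : 1 / δ < c := by
      rw [div_lt_iff₀ hδ0]; nlinarith
    linarith
  have hα2 : 0 < 1 - δ := by linarith
  refine ⟨min (c - 1 / δ) (1 - δ), lt_min hα1 hα2, fun w v => ?_⟩
  calc min (c - 1 / δ) (1 - δ) * (‖w‖ ^ 2 + ‖v‖ ^ 2)
      ≤ (c - 1 / δ) * ‖w‖ ^ 2 + (1 - δ) * ‖v‖ ^ 2 := by
        have h1 := min_le_left (c - 1 / δ) (1 - δ)
        have h2 := min_le_right (c - 1 / δ) (1 - δ)
        nlinarith [sq_nonneg ‖w‖, sq_nonneg ‖v‖]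
    _ ≤ _ := key δ hδ1 hδ2 w v
end

section
/- Let V be a complex vector space and let s, q, p be Hermitian positive semidefinite sesquilinear forms on V. Assume there are constants 0 < c ≤ C < 1 such that c·q(x,x) ≤ s(x,x) ≤ C·q(x,x) for all x ∈ V. Then for all δ, μ with C < δ < 1 and C < μ < 1, and all w, v ∈ V, s(w,w) + C·p(w,w) + q(v,v) + p(v,v) − 2·Re s(w,v) − 2C·Re p(w,v) ≥ c(1 − δ)·q(w,w) + C(1 − C/μ)·p(w,w) + (1 − C/δ)·q(v,v) + (1 − μ)·p(v,v), and in particular the left-hand side is bounded below by a positive constant (depending only on c, C, δ, μ) times q(w,w) + p(w,w) + q(v,v) + p(v,v). -/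
lemma young' {V : Type*} [AddCommGroup V] [Module ℂ V]
    (b : V →ₗ[ℂ] V →ₗ⋆[ℂ] ℂ)
    (hHerm : ∀ x y : V, b y x = starRingEnd ℂ (b x y))
    (hPos : ∀ x : V, 0 ≤ (b x x).re)
    (t : ℝ) (ht : 0 < t) (w v : V) :
    2 * (b w v).re ≤ t * (b w w).re + (1/t) * (b v v).re := by
  have h := hPos ((t:ℂ) • w - v)
  have hvw : (b v w).re = (b w v).re := by rw [hHerm v w]; simp
  simp only [map_sub, map_smul, LinearMap.sub_apply, LinearMap.smul_apply,
    smul_eq_mul, LinearMap.map_smulₛₗ, Complex.star_def, Complex.conj_ofReal,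
    Complex.sub_re, Complex.sub_im, Complex.mul_re, Complex.mul_im,
    Complex.ofReal_re, Complex.ofReal_im] at h
  have key : 2 * t * (b w v).re ≤ t^2 * (b w w).re + (b v v).re := by nlinarith
  rw [← sub_nonneg]
  have heq : t * (b w w).re + 1/t * (b v v).re - 2 * (b w v).re
      = (t^2 * (b w w).re + (b v v).re - 2 * t * (b w v).re) / t := by
    field_simp
  rw [heq]
  exact div_nonneg (by linarith) ht.le


/-- T-coercivity estimate with `T(w,v) = (w - 2v, -v)` for Hermitian positive
semidefinite sesquilinear forms `s, q, p` on a complex vector space, under the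
sandwich `c·q(x,x) ≤ s(x,x) ≤ C·q(x,x)` with `0 < c ≤ C < 1`.  The forms are linear
in the first argument and conjugate-linear in the second, Hermitian means
`s(y,x) = conj (s(x,y))`, and positive semidefiniteness of the (then real) diagonal
values is expressed via the real part. -/
theorem stmt1 {V : Type*} [AddCommGroup V] [Module ℂ V]
    (s q p : V →ₗ[ℂ] V →ₗ⋆[ℂ] ℂ)
    (hsHerm : ∀ x y : V, s y x = starRingEnd ℂ (s x y))
    (hqHerm : ∀ x y : V, q y x = starRingEnd ℂ (q x y))
    (hpHerm : ∀ x y : V, p y x = starRingEnd ℂ (p x y))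
    (hsPos : ∀ x : V, 0 ≤ (s x x).re)
    (hqPos : ∀ x : V, 0 ≤ (q x x).re)
    (hpPos : ∀ x : V, 0 ≤ (p x x).re)
    (c C : ℝ) (hc : 0 < c) (hcC : c ≤ C) (hC : C < 1)
    (hlow : ∀ x : V, c * (q x x).re ≤ (s x x).re)
    (hhigh : ∀ x : V, (s x x).re ≤ C * (q x x).re) :
    ∀ δ μ : ℝ, C < δ → δ < 1 → C < μ → μ < 1 →
      (∀ w v : V,
        c * (1 - δ) * (q w w).re + C * (1 - C / μ) * (p w w).re
            + (1 - C / δ) * (q v v).re + (1 - μ) * (p v v).re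
          ≤ (s w w).re + C * (p w w).re + (q v v).re + (p v v).re
              - 2 * (s w v).re - 2 * (C * (p w v).re)) ∧
      (∃ κ : ℝ, 0 < κ ∧ ∀ w v : V,
        κ * ((q w w).re + (p w w).re + (q v v).re + (p v v).re)
          ≤ (s w w).re + C * (p w w).re + (q v v).re + (p v v).re
              - 2 * (s w v).re - 2 * (C * (p w v).re)) := by
  intro δ μ hCδ hδ1 hCμ hμ1
  have hC0 : 0 < C := lt_of_lt_of_le hc hcC
  have hδ0 : 0 < δ := lt_trans hC0 hCδ
  have hμ0 : 0 < μ := lt_trans hC0 hCμ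
  have main : ∀ w v : V,
      c * (1 - δ) * (q w w).re + C * (1 - C / μ) * (p w w).re
          + (1 - C / δ) * (q v v).re + (1 - μ) * (p v v).re
        ≤ (s w w).re + C * (p w w).re + (q v v).re + (p v v).re
            - 2 * (s w v).re - 2 * (C * (p w v).re) := by
    intro w v
    have h1 := young' s hsHerm hsPos δ hδ0 w v
    have h2 := young' p hpHerm hpPos (C/μ) (by positivity) w v
    rw [one_div_div] at h2
    have h2' := mul_le_mul_of_nonneg_left h2 hC0.le
    have e1 : C * (C/μ * (p w w).re + μ/C * (p v v).re)
        = C * (C/μ) * (p w w).re + μ * (p v v).re := by field_simp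
    rw [e1] at h2'
    have A1 := mul_le_mul_of_nonneg_left (hlow w) (by linarith : (0:ℝ) ≤ 1 - δ)
    have A3 := mul_le_mul_of_nonneg_left (hhigh v) (by positivity : (0:ℝ) ≤ 1/δ)
    have e2 : 1/δ * (C * (q v v).re) = C/δ * (q v v).re := by ring
    rw [e2] at A3
    nlinarith [A1, h1, A3, h2']
  refine ⟨main, ?_⟩
  have k1 : 0 < c * (1 - δ) := by nlinarith
  have k2 : 0 < C * (1 - C / μ) := by
    have : C / μ < 1 := (div_lt_one hμ0).2 hCμ
    nlinarith
  have k3 : 0 < 1 - C / δ := by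
    have : C / δ < 1 := (div_lt_one hδ0).2 hCδ
    linarith
  have k4 : 0 < 1 - μ := by linarith
  refine ⟨min (min (c * (1 - δ)) (C * (1 - C / μ))) (min (1 - C / δ) (1 - μ)),
    lt_min (lt_min k1 k2) (lt_min k3 k4), fun w v => ?_⟩
  set κ := min (min (c * (1 - δ)) (C * (1 - C / μ))) (min (1 - C / δ) (1 - μ)) with hκ
  have b1 : κ * (q w w).re ≤ c * (1 - δ) * (q w w).re :=
    mul_le_mul_of_nonneg_right ((min_le_left _ _).trans (min_le_left _ _)) (hqPos w)
  have b2 : κ * (p w w).re ≤ C * (1 - C / μ) * (p w w).re :=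
    mul_le_mul_of_nonneg_right ((min_le_left _ _).trans (min_le_right _ _)) (hpPos w)
  have b3 : κ * (q v v).re ≤ (1 - C / δ) * (q v v).re :=
    mul_le_mul_of_nonneg_right ((min_le_right _ _).trans (min_le_left _ _)) (hqPos v)
  have b4 : κ * (p v v).re ≤ (1 - μ) * (p v v).re :=
    mul_le_mul_of_nonneg_right ((min_le_right _ _).trans (min_le_right _ _)) (hpPos v)
  have := main w v
  linarith
end
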